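/- Let ξ : ℝ² × ℝ → ℝ² be a C³ solution of the Galbrun equation (∂_t + M ∂_x)² ξ − ∇(div ξ) = f in a uniform flow (M constant), with f C¹. Then ψ := curl ξ satisfies (∂_t + M ∂_x)² ψ = curl f, where curl v = ∂₁v₂ − ∂₂v₁ for a vector field v and the operations are applied in the space variables. -/

import Mathlib

/-- Partial derivative in `x` of a scalar field `u x y t`. -/
noncomputable def pdx (u : ℝ → ℝ → ℝ → ℝ) (x y t : ℝ) : ℝ :=
  deriv (fun a => u a y t) x

/-- Partial derivative in `y` of a scalar field `u x y t`. -/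
noncomputable def pdy (u : ℝ → ℝ → ℝ → ℝ) (x y t : ℝ) : ℝ :=
  deriv (fun b => u x b t) y

/-- Partial derivative in `t` of a scalar field `u x y t`. -/
noncomputable def pdt (u : ℝ → ℝ → ℝ → ℝ) (x y t : ℝ) : ℝ :=
  deriv (fun s => u x y s) t

/-- Divergence of a planar vector field `v x y t : ℝ × ℝ`. -/
noncomputable def div2 (v : ℝ → ℝ → ℝ → ℝ × ℝ) (x y t : ℝ) : ℝ :=
  pdx (fun a b s => (v a b s).1) x y t + pdy (fun a b s => (v a b s).2) x y t

/-- Scalar curl of a planar vector field: `∂₁v₂ - ∂₂v₁`. -/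
noncomputable def curl2 (v : ℝ → ℝ → ℝ → ℝ × ℝ) (x y t : ℝ) : ℝ :=
  pdx (fun a b s => (v a b s).2) x y t - pdy (fun a b s => (v a b s).1) x y t

/-- Material derivative with constant Mach number. -/
noncomputable def matDeriv (M : ℝ) (u : ℝ → ℝ → ℝ → ℝ) (x y t : ℝ) : ℝ :=
  pdt u x y t + M * pdx u x y t


noncomputable def U (u : ℝ → ℝ → ℝ → ℝ) : (ℝ × ℝ) × ℝ → ℝ := fun p => u p.1.1 p.1.2 p.2

noncomputable def Dop (v : (ℝ × ℝ) × ℝ) (u : ℝ → ℝ → ℝ → ℝ) : ℝ → ℝ → ℝ → ℝ :=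
  fun x y t => fderiv ℝ (U u) ((x, y), t) v

lemma U_Dop (v : (ℝ × ℝ) × ℝ) (u : ℝ → ℝ → ℝ → ℝ) :
    U (Dop v u) = fun p => fderiv ℝ (U u) p v := rfl

lemma contDiff_Dop {n m : WithTop ℕ∞} {u : ℝ → ℝ → ℝ → ℝ} (hmn : m + 1 ≤ n)
    (h : ContDiff ℝ n (U u)) (v : (ℝ × ℝ) × ℝ) : ContDiff ℝ m (U (Dop v u)) := by
  rw [U_Dop]
  exact (h.fderiv_right hmn).clm_apply contDiff_const

lemma pdx_eq {u : ℝ → ℝ → ℝ → ℝ} {x y t : ℝ} (h : DifferentiableAt ℝ (U u) ((x, y), t)) :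
    pdx u x y t = Dop ((1, 0), 0) u x y t := by
  have hline : HasDerivAt (fun a : ℝ => ((a, y), t)) (((1 : ℝ), (0 : ℝ)), (0 : ℝ)) x :=
    HasDerivAt.prodMk (HasDerivAt.prodMk (hasDerivAt_id x) (hasDerivAt_const x y)) (hasDerivAt_const x t)
  exact (h.hasFDerivAt.comp_hasDerivAt x hline).deriv

lemma pdy_eq {u : ℝ → ℝ → ℝ → ℝ} {x y t : ℝ} (h : DifferentiableAt ℝ (U u) ((x, y), t)) :
    pdy u x y t = Dop ((0, 1), 0) u x y t := by
  have hline : HasDerivAt (fun b : ℝ => ((x, b), t)) (((0 : ℝ), (1 : ℝ)), (0 : ℝ)) y :=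
    HasDerivAt.prodMk (HasDerivAt.prodMk (hasDerivAt_const y x) (hasDerivAt_id y)) (hasDerivAt_const y t)
  exact (h.hasFDerivAt.comp_hasDerivAt y hline).deriv

lemma pdt_eq {u : ℝ → ℝ → ℝ → ℝ} {x y t : ℝ} (h : DifferentiableAt ℝ (U u) ((x, y), t)) :
    pdt u x y t = Dop ((0, 0), 1) u x y t := by
  have hline : HasDerivAt (fun s : ℝ => ((x, y), s)) (((0 : ℝ), (0 : ℝ)), (1 : ℝ)) t :=
    HasDerivAt.prodMk (HasDerivAt.prodMk (hasDerivAt_const t x) (hasDerivAt_const t y)) (hasDerivAt_id t)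
  exact (h.hasFDerivAt.comp_hasDerivAt t hline).deriv

lemma matDeriv_eq {M : ℝ} {u : ℝ → ℝ → ℝ → ℝ} {x y t : ℝ}
    (h : DifferentiableAt ℝ (U u) ((x, y), t)) :
    matDeriv M u x y t = Dop ((M, 0), 1) u x y t := by
  unfold matDeriv
  rw [pdt_eq h, pdx_eq h]
  unfold Dop
  rw [show (((M : ℝ), (0 : ℝ)), (1 : ℝ)) = ((0, 0), 1) + M • ((1, 0), 0) by
    simp [Prod.ext_iff]]
  rw [map_add, map_smul]
  simp [mul_comm]

lemma Dop_sub {A B : ℝ → ℝ → ℝ → ℝ} (hA : Differentiable ℝ (U A))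
    (hB : Differentiable ℝ (U B)) (v : (ℝ × ℝ) × ℝ) (x y t : ℝ) :
    Dop v (fun a b s => A a b s - B a b s) x y t = Dop v A x y t - Dop v B x y t := by
  show fderiv ℝ (fun p => U A p - U B p) ((x, y), t) v = _
  rw [fderiv_fun_sub (hA _) (hB _)]
  rfl

lemma Dop_comm {u : ℝ → ℝ → ℝ → ℝ} (h : ContDiff ℝ 2 (U u)) (v w : (ℝ × ℝ) × ℝ) :
    Dop v (Dop w u) = Dop w (Dop v u) := by
  funext x y t
  set p : (ℝ × ℝ) × ℝ := ((x, y), t)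
  have hd : Differentiable ℝ (U u) := h.differentiable (by norm_num)
  have h1 : ContDiff ℝ 1 (fderiv ℝ (U u)) := h.fderiv_right le_rfl
  have hd1 : DifferentiableAt ℝ (fderiv ℝ (U u)) p := (h1.differentiable one_ne_zero) p
  have hkey := second_derivative_symmetric (f' := fderiv ℝ (U u))
    (fun q => (hd q).hasFDerivAt) hd1.hasFDerivAt
  have happ : ∀ z : (ℝ × ℝ) × ℝ, fderiv ℝ (fun q => fderiv ℝ (U u) q z) p =
      (ContinuousLinearMap.apply ℝ ℝ z).comp (fderiv ℝ (fderiv ℝ (U u)) p) := by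
    intro z
    exact ((ContinuousLinearMap.apply ℝ ℝ z).hasFDerivAt.comp p hd1.hasFDerivAt).fderiv
  show fderiv ℝ (fun q => fderiv ℝ (U u) q w) p v = fderiv ℝ (fun q => fderiv ℝ (U u) q v) p w
  rw [happ w, happ v]
  exact hkey v w
/-- In a uniform flow, the Lagrangian vorticity `ψ = curl ξ` of a solution of
the Galbrun equation satisfies `D²ψ/Dt² = curl f`. -/
theorem vorticity_equation_uniform_flow (M : ℝ)
    (ξ : ℝ → ℝ → ℝ → ℝ × ℝ) (f : ℝ → ℝ → ℝ → ℝ × ℝ)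
    (hξ : ContDiff ℝ 3 (fun p : (ℝ × ℝ) × ℝ => ξ p.1.1 p.1.2 p.2))
    (hf : ContDiff ℝ 1 (fun p : (ℝ × ℝ) × ℝ => f p.1.1 p.1.2 p.2))
    (hgalbrun : ∀ x y t,
      matDeriv M (matDeriv M (fun a b s => (ξ a b s).1)) x y t
          - pdx (div2 ξ) x y t = (f x y t).1
      ∧ matDeriv M (matDeriv M (fun a b s => (ξ a b s).2)) x y t
          - pdy (div2 ξ) x y t = (f x y t).2) :
    ∀ x y t, matDeriv M (matDeriv M (curl2 ξ)) x y t = curl2 f x y t := by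
  intro x y t
  set ex : (ℝ × ℝ) × ℝ := ((1, 0), 0) with hex
  set ey : (ℝ × ℝ) × ℝ := ((0, 1), 0) with hey
  set m : (ℝ × ℝ) × ℝ := ((M, 0), 1) with hm
  set ξ1 : ℝ → ℝ → ℝ → ℝ := fun a b s => (ξ a b s).1 with hξ1def
  set ξ2 : ℝ → ℝ → ℝ → ℝ := fun a b s => (ξ a b s).2 with hξ2def
  have hξ1 : ContDiff ℝ 3 (U ξ1) := contDiff_fst.comp hξ
  have hξ2 : ContDiff ℝ 3 (U ξ2) := contDiff_snd.comp hξ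
  have hf1 : ContDiff ℝ 1 (U (fun a b s => (f a b s).1)) := contDiff_fst.comp hf
  have hf2 : ContDiff ℝ 1 (U (fun a b s => (f a b s).2)) := contDiff_snd.comp hf
  have h21 : (2 : WithTop ℕ∞) + 1 ≤ 3 := by norm_num
  have h11 : (1 : WithTop ℕ∞) + 1 ≤ 2 := by norm_num
  have h01 : (0 : WithTop ℕ∞) + 1 ≤ 1 := by norm_num
  have dξ1 : Differentiable ℝ (U ξ1) := hξ1.differentiable (by norm_num)
  have dξ2 : Differentiable ℝ (U ξ2) := hξ2.differentiable (by norm_num)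
  have df1 : Differentiable ℝ (U (fun a b s => (f a b s).1)) := hf1.differentiable one_ne_zero
  have df2 : Differentiable ℝ (U (fun a b s => (f a b s).2)) := hf2.differentiable one_ne_zero
  -- divergence as Dop, and its smoothness
  have hdiv : div2 ξ = fun a b s => Dop ex ξ1 a b s + Dop ey ξ2 a b s := by
    funext a b s
    show pdx ξ1 a b s + pdy ξ2 a b s = _
    rw [pdx_eq (dξ1 _), pdy_eq (dξ2 _)]
  have hdivC2 : ContDiff ℝ 2 (U (div2 ξ)) := by
    rw [hdiv]
    exact (contDiff_Dop h21 hξ1 ex).add (contDiff_Dop h21 hξ2 ey)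
  have ddiv : Differentiable ℝ (U (div2 ξ)) := hdivC2.differentiable (by norm_num)
  -- curl as Dop, and its smoothness
  have hcurl : curl2 ξ = fun a b s => Dop ex ξ2 a b s - Dop ey ξ1 a b s := by
    funext a b s
    show pdx ξ2 a b s - pdy ξ1 a b s = _
    rw [pdx_eq (dξ2 _), pdy_eq (dξ1 _)]
  have hcurlC2 : ContDiff ℝ 2 (U (curl2 ξ)) := by
    rw [hcurl]
    exact (contDiff_Dop h21 hξ2 ex).sub (contDiff_Dop h21 hξ1 ey)
  -- LHS
  have hmc : matDeriv M (curl2 ξ) = Dop m (curl2 ξ) := by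
    funext a b s
    exact matDeriv_eq ((hcurlC2.differentiable (by norm_num)) _)
  have e1 : Dop m (curl2 ξ) = fun a b s =>
      Dop m (Dop ex ξ2) a b s - Dop m (Dop ey ξ1) a b s := by
    rw [hcurl]
    funext a b s
    exact Dop_sub ((contDiff_Dop h21 hξ2 ex).differentiable (by norm_num))
      ((contDiff_Dop h21 hξ1 ey).differentiable (by norm_num)) m a b s
  have LHS : matDeriv M (matDeriv M (curl2 ξ)) x y t
      = Dop m (Dop m (Dop ex ξ2)) x y t - Dop m (Dop m (Dop ey ξ1)) x y t := by
    rw [hmc]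
    rw [matDeriv_eq ((contDiff_Dop h11 hcurlC2 m).differentiable one_ne_zero _)]
    rw [e1]
    exact Dop_sub
      ((contDiff_Dop h11 (contDiff_Dop h21 hξ2 ex) m).differentiable one_ne_zero)
      ((contDiff_Dop h11 (contDiff_Dop h21 hξ1 ey) m).differentiable one_ne_zero) m x y t
  -- commute derivatives on the LHS
  have c2 : Dop m (Dop m (Dop ex ξ2)) = Dop ex (Dop m (Dop m ξ2)) := by
    rw [Dop_comm (hξ2.of_le (by norm_num)) m ex,
        Dop_comm (contDiff_Dop h21 hξ2 m) m ex]
  have c1 : Dop m (Dop m (Dop ey ξ1)) = Dop ey (Dop m (Dop m ξ1)) := by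
    rw [Dop_comm (hξ1.of_le (by norm_num)) m ey,
        Dop_comm (contDiff_Dop h21 hξ1 m) m ey]
  -- f components as Dop
  have hm1 : matDeriv M ξ1 = Dop m ξ1 := by
    funext a b s; exact matDeriv_eq (dξ1 _)
  have hm2 : matDeriv M ξ2 = Dop m ξ2 := by
    funext a b s; exact matDeriv_eq (dξ2 _)
  have hf1eq : (fun a b s => (f a b s).1) = fun a b s =>
      Dop m (Dop m ξ1) a b s - Dop ex (div2 ξ) a b s := by
    funext a b s
    rw [← (hgalbrun a b s).1]
    show matDeriv M (matDeriv M ξ1) a b s - pdx (div2 ξ) a b s = _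
    rw [hm1, matDeriv_eq ((contDiff_Dop h21 hξ1 m).differentiable (by norm_num) _),
        pdx_eq (ddiv _)]
  have hf2eq : (fun a b s => (f a b s).2) = fun a b s =>
      Dop m (Dop m ξ2) a b s - Dop ey (div2 ξ) a b s := by
    funext a b s
    rw [← (hgalbrun a b s).2]
    show matDeriv M (matDeriv M ξ2) a b s - pdy (div2 ξ) a b s = _
    rw [hm2, matDeriv_eq ((contDiff_Dop h21 hξ2 m).differentiable (by norm_num) _),
        pdy_eq (ddiv _)]
  -- RHS
  have RHS : curl2 f x y t
      = (Dop ex (Dop m (Dop m ξ2)) x y t - Dop ex (Dop ey (div2 ξ)) x y t)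
        - (Dop ey (Dop m (Dop m ξ1)) x y t - Dop ey (Dop ex (div2 ξ)) x y t) := by
    show pdx (fun a b s => (f a b s).2) x y t - pdy (fun a b s => (f a b s).1) x y t = _
    rw [pdx_eq (df2 _), pdy_eq (df1 _), hf1eq, hf2eq]
    rw [Dop_sub ((contDiff_Dop h11 (contDiff_Dop h21 hξ2 m) m).differentiable one_ne_zero)
      ((contDiff_Dop h11 hdivC2 ey).differentiable one_ne_zero) ex x y t]
    rw [Dop_sub ((contDiff_Dop h11 (contDiff_Dop h21 hξ1 m) m).differentiable one_ne_zero)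
      ((contDiff_Dop h11 hdivC2 ex).differentiable one_ne_zero) ey x y t]
  have cdiv : Dop ex (Dop ey (div2 ξ)) = Dop ey (Dop ex (div2 ξ)) :=
    Dop_comm hdivC2 ex ey
  rw [LHS, RHS, c1, c2, cdiv]
  ring
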